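/- For any swap Schelling game (G,b,Λ), every swap equilibrium σ satisfies DoI(σ) ≥ max{(Δ(G)+1)b/Δ(G), b+1}, and every strategy profile σ' satisfies DoI(σ') ≤ min{(Δ(G)+1)b, n}. Consequently, for every swap equilibrium σ and every strategy profile σ*, DoI(σ*)/DoI(σ) ≤ min{Δ(G), n/(b+1), (Δ(G)+1)b/(b+1)}. -/
import Mathlib


open Finset

namespace SwapSchelling

variable {V : Type*} [Fintype V] [DecidableEq V]

open scoped Classical in
/-- The closed neighborhood `N[v]` of a node `v` in `G`, as a `Finset`. -/
noncomputable def closedNbhd (G : SimpleGraph V) (v : V) : Finset V :=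
  univ.filter (fun u => u = v ∨ G.Adj v u)

open scoped Classical in
/-- The degree `δ(v)` of a node `v` in `G`. -/
noncomputable def deg (G : SimpleGraph V) (v : V) : ℕ :=
  (univ.filter (fun u => G.Adj v u)).card

/-- The maximum degree `Δ(G)`. -/
noncomputable def maxDeg (G : SimpleGraph V) : ℕ := univ.sup (deg G)

/-- The minimum degree `δ(G)`. -/
noncomputable def minDeg (G : SimpleGraph V) : ℕ := sInf (Set.range (deg G))

open scoped Classical in
/-- `frac G c v` is the fraction of nodes in the closed neighborhood of `v` that have
the same color as `v` (that is, `f_i(σ)` for the agent `i` occupying node `v`). -/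
noncomputable def frac (G : SimpleGraph V) (c : V → Bool) (v : V) : ℝ :=
  (((closedNbhd G v).filter (fun u => c u = c v)).card : ℝ) / ((closedNbhd G v).card : ℝ)

/-- The coloring obtained from `c` after the agents on nodes `v` and `w` swap positions. -/
def swapColor (c : V → Bool) (v w : V) : V → Bool := c ∘ Equiv.swap v w

/-- A single-peaked utility function `p` with peak at `Λ`: `p 0 = 0`, `p` is strictly
increasing on `[0,Λ]`, `p Λ = 1`, and `p x = p (Λ(1-x)/(1-Λ))` for `x ∈ [Λ,1]`. -/
structure IsSinglePeaked (p : ℝ → ℝ) (Λ : ℝ) : Prop where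
  peak_mem : Λ ∈ Set.Ioo (0 : ℝ) 1
  map_zero : p 0 = 0
  strictMonoOn : StrictMonoOn p (Set.Icc 0 Λ)
  map_peak : p Λ = 1
  symm : ∀ x ∈ Set.Icc Λ 1, p x = p (Λ * (1 - x) / (1 - Λ))

/-- A strategy profile: a 2-coloring of the nodes with exactly `b` blue (`true`) nodes. -/
def IsProfile (c : V → Bool) (b : ℕ) : Prop :=
  (univ.filter (fun v => c v = true)).card = b

/-- The structural data of a swap Schelling game `(G, b, Λ)` with utility function `p`:
`G` is connected, there are `b` blue agents with `1 ≤ b ≤ n/2`, and `p` is a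
single-peaked utility function with peak `Λ`. -/
structure IsGame (G : SimpleGraph V) (b : ℕ) (Λ : ℝ) (p : ℝ → ℝ) : Prop where
  connected : G.Connected
  one_le_b : 1 ≤ b
  b_le_half : 2 * b ≤ Fintype.card V
  singlePeaked : IsSinglePeaked p Λ

/-- The swap of the two (differently colored) agents occupying nodes `v` and `w`
is profitable: both agents strictly increase their utility. -/
def ProfitableSwap (G : SimpleGraph V) (p : ℝ → ℝ) (c : V → Bool) (v w : V) : Prop :=
  c v ≠ c w ∧
  p (frac G (swapColor c v w) w) > p (frac G c v) ∧
  p (frac G (swapColor c v w) v) > p (frac G c w)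

/-- A swap equilibrium: no profitable swap exists. -/
def IsSwapEquilibrium (G : SimpleGraph V) (p : ℝ → ℝ) (c : V → Bool) : Prop :=
  ∀ v w, ¬ ProfitableSwap G p c v w

open scoped Classical in
/-- The degree of integration: the number of non-segregated agents. -/
noncomputable def DoI (G : SimpleGraph V) (c : V → Bool) : ℕ :=
  (univ.filter (fun v => frac G c v ≠ 1)).card

open scoped Classical in
/-- The number of monochromatic edges of `G` under the coloring `c`. -/
noncomputable def Phi (G : SimpleGraph V) (c : V → Bool) : ℕ :=
  (G.edgeFinset.filter (fun e => ∀ u ∈ e, ∀ w ∈ e, c u = c w)).card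

open scoped Classical in
/-- The number of edges of `G`. -/
noncomputable def numEdges (G : SimpleGraph V) : ℕ :=
  (univ.filter (fun e : Sym2 V => e ∈ G.edgeSet)).card

/-- A finset of nodes is an independent set of `G`. -/
def IsIndepSet (G : SimpleGraph V) (s : Finset V) : Prop :=
  ∀ u ∈ s, ∀ w ∈ s, ¬ G.Adj u w

open scoped Classical in
/-- The independence number `α(G)`. -/
noncomputable def indepNum (G : SimpleGraph V) : ℕ :=
  univ.sup (fun s : Finset V => if IsIndepSet G s then s.card else 0)

open scoped Classical in
/-- The degree of `v` inside the subgraph of `G` induced by the node set `s`. -/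
noncomputable def degOn (G : SimpleGraph V) (s : Finset V) (v : V) : ℕ :=
  (s.filter (fun u => G.Adj v u)).card


section Aux

open scoped Classical

variable {G : SimpleGraph V} {c : V → Bool} {v w : V} {p : ℝ → ℝ} {Λ : ℝ}

lemma mem_closedNbhd {v u : V} : u ∈ closedNbhd G v ↔ u = v ∨ G.Adj v u := by
  simp [closedNbhd]

lemma self_mem_closedNbhd (G : SimpleGraph V) (v : V) : v ∈ closedNbhd G v :=
  mem_closedNbhd.2 (Or.inl rfl)

lemma card_closedNbhd (G : SimpleGraph V) (v : V) :
    (closedNbhd G v).card = deg G v + 1 := by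
  have h : closedNbhd G v = insert v (univ.filter fun u => G.Adj v u) := by
    ext u; simp [closedNbhd]
  rw [h, card_insert_of_notMem (by simp [G.irrefl]), deg]

lemma frac_pos (G : SimpleGraph V) (c : V → Bool) (v : V) : 0 < frac G c v := by
  apply div_pos
  · exact_mod_cast Nat.cast_pos.2 (card_pos.2 ⟨v, by simp [self_mem_closedNbhd]⟩)
  · exact_mod_cast Nat.cast_pos.2 (card_pos.2 ⟨v, self_mem_closedNbhd G v⟩)

lemma frac_eq_one_iff : frac G c v = 1 ↔ ∀ u ∈ closedNbhd G v, c u = c v := by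
  have hpos : (0 : ℝ) < ((closedNbhd G v).card : ℝ) :=
    Nat.cast_pos.2 (card_pos.2 ⟨v, self_mem_closedNbhd G v⟩)
  rw [frac, div_eq_one_iff_eq hpos.ne', Nat.cast_inj]
  constructor
  · intro h
    have := eq_of_subset_of_card_le (filter_subset _ _) h.ge
    intro u hu
    have := (Finset.ext_iff.1 this u).2 hu
    exact (mem_filter.1 this).2
  · intro h
    congr 1
    exact filter_eq_self.2 h

lemma frac_ne_one_iff : frac G c v ≠ 1 ↔ ∃ u ∈ closedNbhd G v, c u ≠ c v := by
  rw [Ne, frac_eq_one_iff]; push_neg; rfl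

lemma exists_nonseg_nbr (h : frac G c v ≠ 1) :
    ∃ u, G.Adj u v ∧ c u ≠ c v ∧ frac G c u ≠ 1 := by
  obtain ⟨u, hu, hcu⟩ := frac_ne_one_iff.1 h
  rcases mem_closedNbhd.1 hu with rfl | hadj
  · exact absurd rfl hcu
  · refine ⟨u, hadj.symm, hcu, frac_ne_one_iff.2 ⟨v, ?_, fun h => hcu h.symm⟩⟩
    exact mem_closedNbhd.2 (Or.inr hadj.symm)

lemma one_le_deg (hG : G.Connected) (h2 : 2 ≤ Fintype.card V) (v : V) :
    1 ≤ deg G v := by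
  obtain ⟨w, hw⟩ := Fintype.exists_ne_of_one_lt_card (by omega) v
  obtain ⟨pw⟩ := hG.preconnected v w
  cases pw with
  | nil => exact absurd rfl hw
  | cons h q =>
    rw [deg]
    exact card_pos.2 ⟨_, mem_filter.2 ⟨mem_univ _, h⟩⟩

lemma deg_le_maxDeg (G : SimpleGraph V) (v : V) : deg G v ≤ maxDeg G :=
  Finset.le_sup (mem_univ v)

lemma card_le_card_mul_maxDeg {s t : Finset V}
    (h : ∀ v ∈ s, ∃ u ∈ t, G.Adj u v) : s.card ≤ t.card * maxDeg G := by
  have hsub : s ⊆ t.biUnion (fun u => univ.filter (fun x => G.Adj u x)) := by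
    intro v hv
    obtain ⟨u, hu, hadj⟩ := h v hv
    exact mem_biUnion.2 ⟨u, hu, by simp [hadj]⟩
  calc s.card ≤ _ := card_le_card hsub
    _ ≤ ∑ u ∈ t, (univ.filter (fun x => G.Adj u x)).card := card_biUnion_le
    _ ≤ ∑ _u ∈ t, maxDeg G := sum_le_sum fun u _ => deg_le_maxDeg G u
    _ = t.card * maxDeg G := by rw [sum_const, smul_eq_mul]

lemma p_one (h : IsSinglePeaked p Λ) : p 1 = 0 := by
  have h1 := h.symm 1 ⟨h.peak_mem.2.le, le_refl 1⟩
  simpa [h.map_zero] using h1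

lemma p_pos (h : IsSinglePeaked p Λ) {x : ℝ} (hx0 : 0 < x) (hx1 : x < 1) :
    0 < p x := by
  obtain ⟨hΛ0, hΛ1⟩ := h.peak_mem
  rcases le_or_gt x Λ with hle | hlt
  · have := h.strictMonoOn ⟨le_refl 0, hΛ0.le⟩ ⟨hx0.le, hle⟩ hx0
    rwa [h.map_zero] at this
  · rw [h.symm x ⟨hlt.le, hx1.le⟩]
    have hy0 : 0 < Λ * (1 - x) / (1 - Λ) := by
      apply div_pos (mul_pos hΛ0 (by linarith)) (by linarith)
    have hyΛ : Λ * (1 - x) / (1 - Λ) ≤ Λ := by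
      rw [div_le_iff₀ (by linarith)]
      nlinarith
    have := h.strictMonoOn ⟨le_refl 0, hΛ0.le⟩ ⟨hy0.le, hyΛ⟩ hy0
    rwa [h.map_zero] at this

lemma frac_swap_seg (hvw : ¬ G.Adj w v) (_hne : v ≠ w)
    (hseg : ∀ u ∈ closedNbhd G w, c u = c w) (hc : c v ≠ c w) :
    frac G (swapColor c v w) w = 1 / ((deg G w : ℝ) + 1) := by
  have hfilter : (closedNbhd G w).filter
      (fun u => swapColor c v w u = swapColor c v w w) = {w} := by
    ext u
    simp only [mem_filter, mem_singleton]
    constructor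
    · rintro ⟨hu, h2⟩
      rcases mem_closedNbhd.1 hu with rfl | h1
      · rfl
      · exfalso
        have huv : u ≠ v := by rintro rfl; exact hvw h1
        have huw : u ≠ w := by rintro rfl; exact G.irrefl h1
        rw [swapColor, Function.comp_apply, Function.comp_apply,
          Equiv.swap_apply_of_ne_of_ne huv huw, Equiv.swap_apply_right] at h2
        exact hc ((hseg u hu) ▸ h2).symm
    · rintro rfl
      exact ⟨self_mem_closedNbhd G _, rfl⟩
  rw [frac, hfilter, card_singleton, card_closedNbhd]
  push_cast
  ring

/-- In a swap equilibrium there cannot exist both a segregated blue agent and a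
segregated red agent. -/
lemma dichotomy (hG : G.Connected) (h2 : 2 ≤ Fintype.card V)
    (hsp : IsSinglePeaked p Λ) (hse : IsSwapEquilibrium G p c) :
    (∀ v, c v = true → frac G c v ≠ 1) ∨ (∀ v, c v = false → frac G c v ≠ 1) := by
  by_contra hcon
  push_neg at hcon
  obtain ⟨⟨v, hv, hsv⟩, ⟨w, hw, hsw⟩⟩ := hcon
  have hc : c v ≠ c w := by rw [hv, hw]; simp
  have hne : v ≠ w := fun h => hc (h ▸ rfl)
  have hsegv : ∀ u ∈ closedNbhd G v, c u = c v := frac_eq_one_iff.1 hsv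
  have hsegw : ∀ u ∈ closedNbhd G w, c u = c w := frac_eq_one_iff.1 hsw
  have hadj : ¬ G.Adj v w := by
    intro h
    exact hc ((hsegw v (mem_closedNbhd.2 (Or.inr h.symm))).trans rfl)
  have hadj' : ¬ G.Adj w v := fun h => hadj h.symm
  apply hse v w
  refine ⟨hc, ?_, ?_⟩
  · -- agent moving to w
    rw [frac_swap_seg hadj' hne hsegw hc, hsv, p_one hsp]
    apply p_pos hsp
    · positivity
    · rw [div_lt_one (by positivity)]
      have := one_le_deg hG h2 w
      have : (1:ℝ) ≤ (deg G w : ℝ) := by exact_mod_cast this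
      linarith
  · -- agent moving to v
    have hswap : swapColor c v w = swapColor c w v := by
      rw [swapColor, swapColor, Equiv.swap_comm]
    rw [hswap, frac_swap_seg hadj (Ne.symm hne) hsegv (Ne.symm hc), hsw, p_one hsp]
    apply p_pos hsp
    · positivity
    · rw [div_lt_one (by positivity)]
      have := one_le_deg hG h2 v
      have : (1:ℝ) ≤ (deg G v : ℝ) := by exact_mod_cast this
      linarith

end Aux

/-- Every swap equilibrium `σ` satisfies
`DoI(σ) ≥ max {(Δ(G)+1)·b/Δ(G), b+1}`, every strategy profile `σ'` satisfies
`DoI(σ') ≤ min {(Δ(G)+1)·b, n}`, and consequently for every swap equilibrium `σ` and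
every profile `σ*`, `DoI(σ*)/DoI(σ) ≤ min {Δ(G), n/(b+1), (Δ(G)+1)·b/(b+1)}`. -/
theorem price_of_anarchy_general_graphs
    {V : Type*} [Fintype V] [DecidableEq V] (G : SimpleGraph V) (b : ℕ) (Λ : ℝ) (p : ℝ → ℝ)
    (hgame : IsGame G b Λ p) :
    (∀ c : V → Bool, IsProfile c b → IsSwapEquilibrium G p c →
        ((maxDeg G + 1) * b : ℝ) / (maxDeg G : ℝ) ≤ (DoI G c : ℝ) ∧ b + 1 ≤ DoI G c) ∧
    (∀ c : V → Bool, IsProfile c b →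
        DoI G c ≤ min ((maxDeg G + 1) * b) (Fintype.card V)) ∧
    (∀ c cstar : V → Bool, IsProfile c b → IsProfile cstar b → IsSwapEquilibrium G p c →
        (DoI G cstar : ℝ) / (DoI G c : ℝ) ≤
          min (maxDeg G : ℝ)
            (min ((Fintype.card V : ℝ) / ((b : ℝ) + 1))
              (((maxDeg G + 1) * b : ℝ) / ((b : ℝ) + 1)))) := by
  classical
  obtain ⟨hconn, hb1, hbn, hsp⟩ := hgame
  have h2n : 2 ≤ Fintype.card V := by omega
  have hne : Nonempty V := Fintype.card_pos_iff.1 (by omega)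
  obtain ⟨v0⟩ := hne
  have hΔ1 : 1 ≤ maxDeg G := le_trans (one_le_deg hconn h2n v0) (deg_le_maxDeg G v0)
  -- splitting DoI
  have hsplit : ∀ c : V → Bool,
      DoI G c = ((univ.filter (fun v => frac G c v ≠ 1)).filter (fun v => c v = true)).card
        + ((univ.filter (fun v => frac G c v ≠ 1)).filter (fun v => c v = false)).card := by
    intro c
    rw [DoI, ← Finset.card_filter_add_card_filter_not
      (p := fun v => c v = true)]
    have hx : (univ.filter (fun v => frac G c v ≠ 1)).filter (fun v => ¬ c v = true)
        = (univ.filter (fun v => frac G c v ≠ 1)).filter (fun v => c v = false) := by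
      ext x
      simp [Bool.not_eq_true]
    rw [hx]
  -- lower bound for swap equilibria (as a natural-number inequality)
  have hlow : ∀ c : V → Bool, IsProfile c b → IsSwapEquilibrium G p c →
      (maxDeg G + 1) * b ≤ maxDeg G * DoI G c ∧ b + 1 ≤ DoI G c := by
    intro c hprof hse
    set S := univ.filter (fun v => frac G c v ≠ 1) with hSdef
    set Bns := S.filter (fun v => c v = true) with hBdef
    set Rns := S.filter (fun v => c v = false) with hRdef
    have hDoI : DoI G c = Bns.card + Rns.card := hsplit c
    have hBR : Bns.card ≤ Rns.card * maxDeg G := by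
      apply card_le_card_mul_maxDeg
      intro v hv
      obtain ⟨hvS, hvb⟩ := mem_filter.1 hv
      obtain ⟨u, hadj, hcu, hfu⟩ := exists_nonseg_nbr (mem_filter.1 hvS).2
      refine ⟨u, ?_, hadj⟩
      rw [hRdef, hSdef]
      simp only [mem_filter, mem_univ, true_and]
      refine ⟨hfu, ?_⟩
      rw [hvb] at hcu
      simpa using hcu
    have hRB : Rns.card ≤ Bns.card * maxDeg G := by
      apply card_le_card_mul_maxDeg
      intro v hv
      obtain ⟨hvS, hvb⟩ := mem_filter.1 hv
      obtain ⟨u, hadj, hcu, hfu⟩ := exists_nonseg_nbr (mem_filter.1 hvS).2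
      refine ⟨u, ?_, hadj⟩
      rw [hBdef, hSdef]
      simp only [mem_filter, mem_univ, true_and]
      refine ⟨hfu, ?_⟩
      rw [hvb] at hcu
      simpa using hcu
    rcases dichotomy hconn h2n hsp hse with hblue | hred
    · -- all blue agents are non-segregated
      have hBcard : Bns.card = b := by
        rw [← hprof]
        congr 1
        rw [hBdef, hSdef, filter_filter]
        apply filter_congr
        intro x _
        exact ⟨fun h => h.2, fun hx => ⟨hblue x hx, hx⟩⟩
      have hR1 : 1 ≤ Rns.card := by
        rcases Nat.eq_zero_or_pos Rns.card with h0 | h0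
        · rw [h0, zero_mul] at hBR; omega
        · exact h0
      constructor
      · rw [hDoI, hBcard]
        have hBR' : b ≤ Rns.card * maxDeg G := hBcard ▸ hBR
        nlinarith [hBR', hΔ1]
      · omega
    · -- all red agents are non-segregated
      have hRcard : Rns.card = Fintype.card V - b := by
        have hall : Rns = univ.filter (fun v => c v = false) := by
          rw [hRdef, hSdef, filter_filter]
          apply filter_congr
          intro x _
          exact ⟨fun h => h.2, fun hx => ⟨hred x hx, hx⟩⟩
        rw [hall]
        have := Finset.card_filter_add_card_filter_not
          (s := (univ : Finset V)) (p := fun v => c v = true)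
        have heq : (univ.filter (fun v => ¬ c v = true)) =
            (univ.filter (fun v => c v = false)) := by
          apply filter_congr; intro x _; simp [Bool.not_eq_true]
        rw [heq, hprof, card_univ] at this
        omega
      have hRb : b ≤ Rns.card := by omega
      have hB1 : 1 ≤ Bns.card := by
        rcases Nat.eq_zero_or_pos Bns.card with h0 | h0
        · rw [h0, zero_mul] at hRB; omega
        · exact h0
      constructor
      · rw [hDoI]
        have h3 := Nat.mul_le_mul_left (maxDeg G) hRb
        nlinarith [hRB, hRb, h3, hΔ1]
      · omega
  -- upper bound for all profiles
  have hupp : ∀ c : V → Bool, IsProfile c b →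
      DoI G c ≤ min ((maxDeg G + 1) * b) (Fintype.card V) := by
    intro c hprof
    refine le_min ?_ ?_
    · set S := univ.filter (fun v => frac G c v ≠ 1) with hSdef
      rw [hsplit c]
      have hB : (S.filter (fun v => c v = true)).card ≤ b := by
        rw [← hprof]
        apply card_le_card
        rw [hSdef, filter_filter]
        intro x hx
        simp only [mem_filter] at hx ⊢
        exact ⟨hx.1, hx.2.2⟩
      have hR : (S.filter (fun v => c v = false)).card ≤ b * maxDeg G := by
        rw [← hprof]
        apply card_le_card_mul_maxDeg
        intro v hv
        obtain ⟨hvS, hvb⟩ := mem_filter.1 hv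
        obtain ⟨u, hadj, hcu, _⟩ := exists_nonseg_nbr (mem_filter.1 hvS).2
        refine ⟨u, ?_, hadj⟩
        simp only [mem_filter, mem_univ, true_and]
        rw [hvb] at hcu
        simpa using hcu
      nlinarith [hB, hR]
    · exact le_trans (card_le_card (filter_subset _ _)) (le_of_eq (card_univ))
  refine ⟨?_, hupp, ?_⟩
  · intro c hprof hse
    obtain ⟨h1, h2⟩ := hlow c hprof hse
    refine ⟨?_, h2⟩
    rw [div_le_iff₀ (by exact_mod_cast Nat.cast_pos.2 (by omega : 0 < maxDeg G))]
    calc ((maxDeg G + 1) * b : ℝ) = (((maxDeg G + 1) * b : ℕ) : ℝ) := by push_cast; ring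
      _ ≤ ((maxDeg G * DoI G c : ℕ) : ℝ) := by exact_mod_cast h1
      _ = (DoI G c : ℝ) * (maxDeg G : ℝ) := by push_cast; ring
  · intro c cstar hprof hprofstar hse
    obtain ⟨h1, h2⟩ := hlow c hprof hse
    have hupps := hupp cstar hprofstar
    have hDpos : (0:ℝ) < (DoI G c : ℝ) := by
      have : 0 < DoI G c := by omega
      exact_mod_cast this
    have hD2 : ((b:ℝ) + 1) ≤ (DoI G c : ℝ) := by exact_mod_cast h2
    have hDs1 : (DoI G cstar : ℝ) ≤ ((maxDeg G : ℝ) + 1) * b := by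
      have := le_trans hupps (min_le_left _ _)
      exact_mod_cast this
    have hDs2 : (DoI G cstar : ℝ) ≤ (Fintype.card V : ℝ) := by
      have := le_trans hupps (min_le_right _ _)
      exact_mod_cast this
    have hbpos : (0:ℝ) < (b:ℝ) + 1 := by positivity
    refine le_min ?_ (le_min ?_ ?_)
    · rw [div_le_iff₀ hDpos]
      have h1' : ((maxDeg G : ℝ) + 1) * b ≤ (maxDeg G : ℝ) * (DoI G c : ℝ) := by
        exact_mod_cast h1
      linarith
    · rw [div_le_div_iff₀ hDpos hbpos]
      nlinarith [hDs2, hD2, hDpos, (by positivity : (0:ℝ) ≤ (DoI G cstar : ℝ)),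
        (by positivity : (0:ℝ) ≤ (Fintype.card V : ℝ))]
    · rw [div_le_div_iff₀ hDpos hbpos]
      have hnum : (0:ℝ) ≤ ((maxDeg G : ℝ) + 1) * b := by positivity
      nlinarith [hDs1, hD2, hnum, (by positivity : (0:ℝ) ≤ (DoI G cstar : ℝ))]

end SwapSchelling
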